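/- Let M be a compact metric space and f : M → M a continuous surjection; equip M_f := { x : ℤ → M | f(x(n)) = x(n+1) for all n } with the subspace topology of the product topology on M^ℤ, let σ : M_f → M_f be the left shift (σx)(n) = x(n+1), and π : M_f → M, π(x) = x(0). Let ν be a σ-invariant Borel probability measure on M_f and set μ := π_*ν. Fix a real number λ with 0 < λ < 1 and a set S ⊆ M, and suppose there is a constant C > 0 such that μ({ p ∈ M : infDist(p, S) < λ^n }) ≤ C·λ^n for every n ∈ ℕ. Then for ν-almost every x ∈ M_f there exists δ > 0 such that infDist(x(−n), S) ≥ δ·λ^n for all integers n ≥ 0. -/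

import Mathlib

open MeasureTheory Metric Filter

/-- The left shift on the space of orbits of `f`. -/
def orbitShift {M : Type*} (f : M → M)
    (x : {x : ℤ → M // ∀ n : ℤ, f (x n) = x (n + 1)}) :
    {x : ℤ → M // ∀ n : ℤ, f (x n) = x (n + 1)} :=
  ⟨fun n => x.1 (n + 1), fun n => x.2 (n + 1)⟩

lemma measurable_evalOrbit {M : Type*} [MeasurableSpace M] (f : M → M) (n : ℤ) :
    Measurable (fun x : {x : ℤ → M // ∀ n : ℤ, f (x n) = x (n + 1)} => x.1 n) :=
  (measurable_pi_apply n).comp measurable_subtype_coe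

lemma measurable_orbitShift {M : Type*} [MeasurableSpace M] (f : M → M) :
    Measurable (orbitShift f) := by
  apply Measurable.subtype_mk
  exact measurable_pi_lambda _ fun n => (measurable_pi_apply (n + 1)).comp measurable_subtype_coe

lemma orbitShift_iterate {M : Type*} (f : M → M) (k : ℕ)
    (x : {x : ℤ → M // ∀ n : ℤ, f (x n) = x (n + 1)}) (m : ℤ) :
    ((orbitShift f)^[k] x).1 m = x.1 (m + k) := by
  induction k generalizing m with
  | zero => simp
  | succ k ih =>
      rw [Function.iterate_succ_apply']
      show ((orbitShift f)^[k] x).1 (m + 1) = x.1 (m + ((k + 1 : ℕ) : ℤ))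
      rw [ih]
      push_cast
      ring

theorem ae_orbit_infDist_lower_bound {M : Type*} [MetricSpace M] [CompactSpace M]
    [MeasurableSpace M] [BorelSpace M]
    (f : M → M) (hf : Continuous f) (hsurj : Function.Surjective f)
    (ν : Measure {x : ℤ → M // ∀ n : ℤ, f (x n) = x (n + 1)})
    [IsProbabilityMeasure ν]
    (hνinv : Measure.map (orbitShift f) ν = ν)
    (μ : Measure M)
    (hμ : μ = Measure.map (fun x : {x : ℤ → M // ∀ n : ℤ, f (x n) = x (n + 1)} => x.1 0) ν)
    (lam : ℝ) (hlam0 : 0 < lam) (hlam1 : lam < 1)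
    (S : Set M) (C : ℝ) (hC : 0 < C)
    (hμS : ∀ n : ℕ, μ {p : M | infDist p S < lam ^ n} ≤ ENNReal.ofReal (C * lam ^ n)) :
    ∀ᵐ x ∂ν, ∃ δ > (0 : ℝ), ∀ n : ℕ, δ * lam ^ n ≤ infDist (x.1 (-(n : ℤ))) S := by
  have hmeasσ : Measurable (orbitShift f) := measurable_orbitShift f
  -- the n-th iterate of the shift preserves ν
  have hiter_inv : ∀ k : ℕ, Measure.map ((orbitShift f)^[k]) ν = ν := by
    intro k
    induction k with
    | zero => simp
    | succ k ih =>
        rw [Function.iterate_succ', ← Measure.map_map hmeasσ (hmeasσ.iterate k), ih, hνinv]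
  -- pushforward of ν under x ↦ x (-n) is μ
  have hmap : ∀ n : ℕ,
      Measure.map (fun x : {x : ℤ → M // ∀ n : ℤ, f (x n) = x (n + 1)} => x.1 (-(n : ℤ))) ν
        = μ := by
    intro n
    have hcomp : (fun x : {x : ℤ → M // ∀ n : ℤ, f (x n) = x (n + 1)} => x.1 (-(n : ℤ)))
        ∘ (orbitShift f)^[n]
        = (fun x : {x : ℤ → M // ∀ n : ℤ, f (x n) = x (n + 1)} => x.1 0) := by
      funext x
      simp [Function.comp, orbitShift_iterate]
    calc Measure.map (fun x : {x : ℤ → M // ∀ n : ℤ, f (x n) = x (n + 1)} => x.1 (-(n : ℤ))) ν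
        = Measure.map (fun x : {x : ℤ → M // ∀ n : ℤ, f (x n) = x (n + 1)} => x.1 (-(n : ℤ)))
            (Measure.map ((orbitShift f)^[n]) ν) := by rw [hiter_inv]
      _ = Measure.map ((fun x : {x : ℤ → M // ∀ n : ℤ, f (x n) = x (n + 1)} => x.1 (-(n : ℤ)))
            ∘ (orbitShift f)^[n]) ν :=
          Measure.map_map (measurable_evalOrbit f _) (hmeasσ.iterate n)
      _ = Measure.map (fun x : {x : ℤ → M // ∀ n : ℤ, f (x n) = x (n + 1)} => x.1 0) ν := by
          rw [hcomp]
      _ = μ := hμ.symm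
  have hSopen : ∀ r : ℝ, MeasurableSet {p : M | infDist p S < r} := fun r =>
    ((isOpen_lt (continuous_infDist_pt S) continuous_const)).measurableSet
  -- Borel–Cantelli events
  set s : ℕ → Set {x : ℤ → M // ∀ n : ℤ, f (x n) = x (n + 1)} :=
    fun n => {x | infDist (x.1 (-(n : ℤ))) S < lam ^ (n + 1)} with hs
  have hνs : ∀ n : ℕ, ν (s n) ≤ ENNReal.ofReal (C * lam ^ (n + 1)) := by
    intro n
    have : ν (s n) = μ {p : M | infDist p S < lam ^ (n + 1)} := by
      rw [← hmap n, Measure.map_apply (measurable_evalOrbit f _) (hSopen _)]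
      rfl
    rw [this]
    exact hμS (n + 1)
  have hsummable : Summable fun n : ℕ => C * lam ^ (n + 1) := by
    have : Summable fun n : ℕ => (C * lam) * lam ^ n :=
      (summable_geometric_of_lt_one hlam0.le hlam1).mul_left (C * lam)
    convert this using 2 with n
    ring
  have hsum : (∑' n : ℕ, ν (s n)) ≠ ⊤ := by
    have h1 : (∑' n : ℕ, ν (s n)) ≤ ∑' n : ℕ, ENNReal.ofReal (C * lam ^ (n + 1)) :=
      ENNReal.tsum_le_tsum hνs
    have h2 : (∑' n : ℕ, ENNReal.ofReal (C * lam ^ (n + 1)))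
        = ENNReal.ofReal (∑' n : ℕ, C * lam ^ (n + 1)) := by
      rw [ENNReal.ofReal_tsum_of_nonneg (fun n => by positivity) hsummable]
    exact ne_top_of_le_ne_top (by rw [h2]; exact ENNReal.ofReal_ne_top) h1
  have hBC : ∀ᵐ x ∂ν, ∀ᶠ n in atTop, x ∉ s n := ae_eventually_notMem hsum
  -- a.e. each coordinate has positive distance to S
  have hμzero : μ {p : M | infDist p S = 0} = 0 := by
    have hle : ∀ m : ℕ, μ {p : M | infDist p S = 0} ≤ ENNReal.ofReal (C * lam ^ m) := by
      intro m
      refine le_trans (measure_mono ?_) (hμS m)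
      intro p hp
      simp only [Set.mem_setOf_eq] at hp ⊢
      rw [hp]
      positivity
    have htend : Tendsto (fun m : ℕ => ENNReal.ofReal (C * lam ^ m)) atTop (nhds 0) := by
      have : Tendsto (fun m : ℕ => C * lam ^ m) atTop (nhds (C * 0)) :=
        (tendsto_pow_atTop_nhds_zero_of_lt_one hlam0.le hlam1).const_mul C
      rw [mul_zero] at this
      simpa using (ENNReal.tendsto_ofReal this)
    exact le_antisymm (ge_of_tendsto htend (Eventually.of_forall hle)) zero_le
  have hpos : ∀ᵐ x ∂ν, ∀ n : ℕ, infDist (x.1 (-(n : ℤ))) S ≠ 0 := by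
    rw [ae_all_iff]
    intro n
    have hmeasset : MeasurableSet {p : M | infDist p S = 0} :=
      (continuous_infDist_pt S).measurable (measurableSet_singleton 0)
    have : ν {x | infDist (x.1 (-(n : ℤ))) S = 0} = μ {p : M | infDist p S = 0} := by
      rw [← hmap n, Measure.map_apply (measurable_evalOrbit f _) hmeasset]
      rfl
    rw [ae_iff]
    simpa only [not_not] using this.trans hμzero
  filter_upwards [hBC, hpos] with x hx hx0
  rw [eventually_atTop] at hx
  obtain ⟨N, hN⟩ := hx
  set F : Finset ℝ :=
    insert lam ((Finset.range N).image fun n : ℕ => infDist (x.1 (-(n : ℤ))) S / lam ^ n) with hF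
  have hFne : F.Nonempty := Finset.insert_nonempty _ _
  refine ⟨F.min' hFne, ?_, ?_⟩
  · rw [gt_iff_lt, Finset.lt_min'_iff]
    intro b hb
    simp only [hF, Finset.mem_insert, Finset.mem_image, Finset.mem_range] at hb
    rcases hb with rfl | ⟨m, _, rfl⟩
    · exact hlam0
    · have h1 : 0 < infDist (x.1 (-(m : ℤ))) S :=
        lt_of_le_of_ne infDist_nonneg (Ne.symm (hx0 m))
      positivity
  · intro n
    rcases lt_or_ge n N with hnN | hnN
    · have hmem : infDist (x.1 (-(n : ℤ))) S / lam ^ n ∈ F := by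
        simp only [hF, Finset.mem_insert, Finset.mem_image, Finset.mem_range]
        exact Or.inr ⟨n, hnN, rfl⟩
      have := Finset.min'_le F _ hmem
      calc F.min' hFne * lam ^ n ≤ (infDist (x.1 (-(n : ℤ))) S / lam ^ n) * lam ^ n :=
            mul_le_mul_of_nonneg_right this (by positivity)
        _ = infDist (x.1 (-(n : ℤ))) S := by
            field_simp
    · have hmem : lam ∈ F := Finset.mem_insert_self _ _
      have h1 := Finset.min'_le F _ hmem
      have h2 : ¬ infDist (x.1 (-(n : ℤ))) S < lam ^ (n + 1) := hN n hnN
      push_neg at h2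
      calc F.min' hFne * lam ^ n ≤ lam * lam ^ n :=
            mul_le_mul_of_nonneg_right h1 (by positivity)
        _ = lam ^ (n + 1) := by ring
        _ ≤ infDist (x.1 (-(n : ℤ))) S := h2
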